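/- For every residue r modulo 25 with r ≢ 0 (mod 25), there exists a squarefree integer P_0 with 26141 ≤ P_0 ≤ 26669, P_0 ≡ 1 (mod 4), P_0 ≡ r (mod 25), and every prime factor of P_0 congruent to 5 modulo 6. -/

import Mathlib

private lemma ofPrime (n : ℕ) (hn : n.Prime) (h1 : 26141 ≤ n) (h2 : n ≤ 26669)
    (h4 : n % 4 = 1) (h6 : n % 6 = 5) {r : ZMod 25} (hr : (n : ZMod 25) = r) :
    ∃ P₀ : ℕ, Squarefree P₀ ∧ 26141 ≤ P₀ ∧ P₀ ≤ 26669 ∧ P₀ % 4 = 1 ∧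
      (P₀ : ZMod 25) = r ∧ ∀ p : ℕ, p.Prime → p ∣ P₀ → p % 6 = 5 :=
  ⟨n, hn.prime.squarefree, h1, h2, h4, hr, fun p hp hd => by
    rwa [(Nat.prime_dvd_prime_iff_eq hp hn).mp hd]⟩

private lemma ofTwo (p q n : ℕ) (hp : p.Prime) (hq : q.Prime) (hpq : p ≠ q)
    (hn : p * q = n) (h1 : 26141 ≤ n) (h2 : n ≤ 26669) (h4 : n % 4 = 1)
    (h6p : p % 6 = 5) (h6q : q % 6 = 5) {r : ZMod 25} (hr : (n : ZMod 25) = r) :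
    ∃ P₀ : ℕ, Squarefree P₀ ∧ 26141 ≤ P₀ ∧ P₀ ≤ 26669 ∧ P₀ % 4 = 1 ∧
      (P₀ : ZMod 25) = r ∧ ∀ p : ℕ, p.Prime → p ∣ P₀ → p % 6 = 5 := by
  subst hn
  refine ⟨p * q, (Nat.squarefree_mul ((Nat.coprime_primes hp hq).mpr hpq)).mpr
    ⟨hp.prime.squarefree, hq.prime.squarefree⟩, h1, h2, h4, hr, fun l hl hd => ?_⟩
  rcases (Nat.Prime.dvd_mul hl).mp hd with h | h
  · rwa [(Nat.prime_dvd_prime_iff_eq hl hp).mp h]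
  · rwa [(Nat.prime_dvd_prime_iff_eq hl hq).mp h]

theorem table_two_covers_all_residues
    (r : ZMod 25) (hr : r ≠ 0) :
    ∃ P₀ : ℕ, Squarefree P₀ ∧ 26141 ≤ P₀ ∧ P₀ ≤ 26669 ∧ P₀ % 4 = 1 ∧
      (P₀ : ZMod 25) = r ∧ ∀ p : ℕ, p.Prime → p ∣ P₀ → p % 6 = 5 := by
  fin_cases r
  · exact absurd rfl hr
  · exact ofTwo 17 1553 26401 (by norm_num) (by norm_num) (by norm_num) (by norm_num) (by norm_num) (by norm_num) (by norm_num) (by norm_num) (by norm_num) (by rfl)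
  · exact ofPrime 26177 (by norm_num) (by norm_num) (by norm_num) (by norm_num) (by norm_num) (by rfl)
  · exact ofPrime 26153 (by norm_num) (by norm_num) (by norm_num) (by norm_num) (by norm_num) (by rfl)
  · exact ofTwo 113 233 26329 (by norm_num) (by norm_num) (by norm_num) (by norm_num) (by norm_num) (by norm_num) (by norm_num) (by norm_num) (by norm_num) (by rfl)
  · exact ofTwo 5 5261 26305 (by norm_num) (by norm_num) (by norm_num) (by norm_num) (by norm_num) (by norm_num) (by norm_num) (by norm_num) (by norm_num) (by rfl)
  · exact ofTwo 41 641 26281 (by norm_num) (by norm_num) (by norm_num) (by norm_num) (by norm_num) (by norm_num) (by norm_num) (by norm_num) (by norm_num) (by rfl)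
  · exact ofPrime 26357 (by norm_num) (by norm_num) (by norm_num) (by norm_num) (by norm_num) (by rfl)
  · exact ofPrime 26633 (by norm_num) (by norm_num) (by norm_num) (by norm_num) (by norm_num) (by rfl)
  · exact ofPrime 26309 (by norm_num) (by norm_num) (by norm_num) (by norm_num) (by norm_num) (by rfl)
  · exact ofTwo 5 5237 26185 (by norm_num) (by norm_num) (by norm_num) (by norm_num) (by norm_num) (by norm_num) (by norm_num) (by norm_num) (by norm_num) (by rfl)
  · exact ofPrime 26261 (by norm_num) (by norm_num) (by norm_num) (by norm_num) (by norm_num) (by rfl)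
  · exact ofPrime 26237 (by norm_num) (by norm_num) (by norm_num) (by norm_num) (by norm_num) (by rfl)
  · exact ofPrime 26513 (by norm_num) (by norm_num) (by norm_num) (by norm_num) (by norm_num) (by rfl)
  · exact ofPrime 26189 (by norm_num) (by norm_num) (by norm_num) (by norm_num) (by norm_num) (by rfl)
  · exact ofTwo 5 5273 26365 (by norm_num) (by norm_num) (by norm_num) (by norm_num) (by norm_num) (by norm_num) (by norm_num) (by norm_num) (by norm_num) (by rfl)
  · exact ofPrime 26141 (by norm_num) (by norm_num) (by norm_num) (by norm_num) (by norm_num) (by rfl)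
  · exact ofPrime 26417 (by norm_num) (by norm_num) (by norm_num) (by norm_num) (by norm_num) (by rfl)
  · exact ofPrime 26393 (by norm_num) (by norm_num) (by norm_num) (by norm_num) (by norm_num) (by rfl)
  · exact ofPrime 26669 (by norm_num) (by norm_num) (by norm_num) (by norm_num) (by norm_num) (by rfl)
  · exact ofTwo 5 5309 26545 (by norm_num) (by norm_num) (by norm_num) (by norm_num) (by norm_num) (by norm_num) (by norm_num) (by norm_num) (by norm_num) (by rfl)
  · exact ofPrime 26321 (by norm_num) (by norm_num) (by norm_num) (by norm_num) (by norm_num) (by rfl)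
  · exact ofPrime 26297 (by norm_num) (by norm_num) (by norm_num) (by norm_num) (by norm_num) (by rfl)
  · exact ofTwo 23 1151 26473 (by norm_num) (by norm_num) (by norm_num) (by norm_num) (by norm_num) (by norm_num) (by norm_num) (by norm_num) (by norm_num) (by rfl)
  · exact ofPrime 26249 (by norm_num) (by norm_num) (by norm_num) (by norm_num) (by norm_num) (by rfl)
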